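/- Assume Nelson's hypercontractive inequality: ‖N_t h‖_q ≤ ‖h‖_p in L^p(ℝ, e^{-πx²}dx) whenever (p−1) = e^{-2t}(q−1) with 1 < p < q. Then for every nonnegative h with ‖N_t h‖₁ = ‖h‖₁ one has (‖N_t h‖_q − ‖h‖₁)/(q−1) ≤ e^{-2t} (‖h‖_p − ‖h‖₁)/(p−1), and taking the limit p,q → 1 yields ∫ N_t h log N_t h e^{-πx²}dx ≤ e^{-2t} ∫ h log h e^{-πx²}dx + (1−e^{-2t})‖h‖₁ log ‖h‖₁, provided h is bounded. -/

import Mathlib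

open MeasureTheory Real
open Filter Topology

/-- The Ornstein–Uhlenbeck semigroup with invariant measure `e^{-πx²}dx`. -/
noncomputable def OUsemigroup (t : ℝ) (h : ℝ → ℝ) : ℝ → ℝ :=
  fun x => ∫ y : ℝ, h (Real.exp (-t) * x + Real.sqrt (1 - Real.exp (-2 * t)) * y) *
    Real.exp (-π * y ^ 2)

/-- The `L^p(ℝ, e^{-πx²}dx)` norm of a nonnegative function. -/
noncomputable def gaussLpNorm (h : ℝ → ℝ) (p : ℝ) : ℝ :=
  (∫ x : ℝ, (h x) ^ p * Real.exp (-π * x ^ 2)) ^ (1 / p)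

/-- The `L¹(ℝ, e^{-πx²}dx)` norm of a nonnegative function. -/
noncomputable def gaussL1Norm (h : ℝ → ℝ) : ℝ :=
  ∫ x : ℝ, h x * Real.exp (-π * x ^ 2)

lemma gauss_integrable : Integrable (fun x : ℝ => Real.exp (-π * x ^ 2)) :=
  integrable_exp_neg_mul_sq Real.pi_pos

lemma integrable_bdd_mul_gauss {g : ℝ → ℝ} (hgm : Measurable g)
    (hg0 : ∀ x, 0 ≤ g x) {M : ℝ} (hgM : ∀ x, g x ≤ M) :
    Integrable (fun x => g x * Real.exp (-π * x ^ 2)) :=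
  gauss_integrable.bdd_mul hgm.aestronglyMeasurable
    (c := M) (Eventually.of_forall fun x => by rw [Real.norm_eq_abs, abs_of_nonneg (hg0 x)]; exact hgM x)

lemma gauss_total' : (∫ x : ℝ, Real.exp (-π * x ^ 2)) = 1 := by
  rw [integral_gaussian, div_self Real.pi_ne_zero, Real.sqrt_one]

lemma F_hasDeriv {g : ℝ → ℝ} (hg0 : ∀ x, 0 ≤ g x) (hgm : Measurable g)
    {C : ℝ} (hgC : ∀ x, g x ≤ C) :
    HasDerivAt (fun p : ℝ => ∫ x : ℝ, g x ^ p * Real.exp (-π * x ^ 2))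
      (∫ x : ℝ, g x * Real.log (g x) * Real.exp (-π * x ^ 2)) 1 := by
  set M := max 1 C with hM
  have hM1 : (1:ℝ) ≤ M := le_max_left _ _
  have hgM : ∀ x, g x ≤ M := fun x => (hgC x).trans (le_max_right _ _)
  have key := hasDerivAt_integral_of_dominated_loc_of_deriv_le (μ := volume)
      (F := fun (p : ℝ) (x : ℝ) => g x ^ p * Real.exp (-π * x ^ 2))
      (F' := fun (p : ℝ) (x : ℝ) => (g x ^ p * Real.log (g x)) * Real.exp (-π * x ^ 2))
      (x₀ := 1) (s := Metric.ball 1 (1/2))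
      (bound := fun x => (2 + M ^ 2 * M) * Real.exp (-π * x ^ 2))
      (Metric.ball_mem_nhds _ (by norm_num))
      ?_ ?_ ?_ ?_ ?_ ?_
  · have h1 : (fun x : ℝ => (g x ^ (1:ℝ) * Real.log (g x)) * Real.exp (-π * x ^ 2))
        = fun x : ℝ => g x * Real.log (g x) * Real.exp (-π * x ^ 2) := by
      funext x; rw [Real.rpow_one]
    have := key.2
    rwa [h1] at this
  · -- hF_meas
    filter_upwards [eventually_gt_nhds (by norm_num : (0:ℝ) < 1)] with p hp
    exact (((Real.continuous_rpow_const hp.le).measurable.comp hgm).mul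
      (by fun_prop)).aestronglyMeasurable
  · -- hF_int at 1
    have : (fun x : ℝ => g x ^ (1:ℝ) * Real.exp (-π * x ^ 2))
        = fun x => g x * Real.exp (-π * x ^ 2) := by funext x; rw [Real.rpow_one]
    show Integrable (fun x : ℝ => g x ^ (1:ℝ) * Real.exp (-π * x ^ 2)) volume
    rw [this]
    exact integrable_bdd_mul_gauss hgm hg0 hgM
  · -- hF'_meas
    exact ((((Real.continuous_rpow_const one_pos.le).measurable.comp hgm).mul
      (Real.measurable_log.comp hgm)).mul (by fun_prop)).aestronglyMeasurable
  · -- bound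
    refine Eventually.of_forall fun x => fun p hp => ?_
    show ‖g x ^ p * Real.log (g x) * Real.exp (-π * x ^ 2)‖ ≤ (2 + M ^ 2 * M) * Real.exp (-π * x ^ 2)
    have hp' : |p - 1| < 1/2 := by simpa [Real.dist_eq] using hp
    have hp1 : (1:ℝ)/2 ≤ p := by cases abs_lt.mp hp' with | intro a b => linarith
    have hp2 : p ≤ 3/2 := by cases abs_lt.mp hp' with | intro a b => linarith
    rw [norm_mul, Real.norm_eq_abs (Real.exp _), abs_of_pos (Real.exp_pos _)]
    refine mul_le_mul_of_nonneg_right ?_ (Real.exp_pos _).le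
    rcases lt_trichotomy (g x) 1 with hgx | hgx | hgx
    · rcases eq_or_lt_of_le (hg0 x) with h0 | h0
      · rw [← h0, Real.zero_rpow (by linarith)]
        simp
        nlinarith [sq_nonneg M, hM1]
      · -- 0 < g x < 1
        have hs : 0 < g x ^ ((1:ℝ)/2) := Real.rpow_pos_of_pos h0 _
        have hgp : g x ^ p ≤ g x ^ ((1:ℝ)/2) :=
          Real.rpow_le_rpow_of_exponent_ge h0 hgx.le hp1
        have hlog : Real.log (g x) < 0 := Real.log_neg h0 hgx
        have hls : -Real.log (g x ^ ((1:ℝ)/2)) ≤ (g x ^ ((1:ℝ)/2))⁻¹ := by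
          have := Real.log_le_sub_one_of_pos (inv_pos.mpr hs)
          rw [Real.log_inv] at this
          linarith [inv_pos.mpr hs]
        have hl2 : -Real.log (g x) = 2 * (-Real.log (g x ^ ((1:ℝ)/2))) := by
          rw [Real.log_rpow h0]; ring
        have hmain : g x ^ p * (-Real.log (g x)) ≤ 2 := by
          calc g x ^ p * (-Real.log (g x))
              ≤ g x ^ ((1:ℝ)/2) * (2 * (g x ^ ((1:ℝ)/2))⁻¹) := by
                rw [hl2]
                refine mul_le_mul hgp (by linarith) (by linarith) hs.le
            _ = 2 := by field_simp
        rw [Real.norm_eq_abs, abs_mul, abs_of_nonneg (Real.rpow_nonneg (hg0 x) p),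
          abs_of_neg hlog]
        nlinarith [sq_nonneg M, hM1]
    · rw [hgx]; simp; nlinarith [sq_nonneg M, hM1]
    · -- 1 < g x
      have hgp : g x ^ p ≤ M ^ (2:ℝ) := by
        calc g x ^ p ≤ M ^ p := Real.rpow_le_rpow (hg0 x) (hgM x) (by linarith)
          _ ≤ M ^ (2:ℝ) := Real.rpow_le_rpow_of_exponent_le hM1 (by linarith)
      have hlogpos : 0 ≤ Real.log (g x) := Real.log_nonneg hgx.le
      have hlogM : Real.log (g x) ≤ M := by
        have h1 := Real.log_le_sub_one_of_pos (by linarith : (0:ℝ) < g x)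
        linarith [hgM x]
      rw [Real.norm_eq_abs, abs_mul, abs_of_nonneg (Real.rpow_nonneg (hg0 x) p), abs_of_nonneg hlogpos]
      have hM2 : M ^ (2:ℝ) = M ^ 2 := by
        rw [show ((2:ℝ) = ((2:ℕ):ℝ)) by norm_num, Real.rpow_natCast]
      have := mul_le_mul hgp hlogM hlogpos (by positivity : (0:ℝ) ≤ M ^ (2:ℝ))
      rw [hM2] at this
      linarith
  · -- bound integrable
    exact gauss_integrable.const_mul _
  · -- h_diff
    refine Eventually.of_forall fun x => fun p hp => ?_
    show HasDerivAt (fun q : ℝ => g x ^ q * Real.exp (-π * x ^ 2))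
      (g x ^ p * Real.log (g x) * Real.exp (-π * x ^ 2)) p
    have hp' : |p - 1| < 1/2 := by simpa [Real.dist_eq] using hp
    have hp0 : 0 < p := by cases abs_lt.mp hp' with | intro a b => linarith
    rcases eq_or_lt_of_le (hg0 x) with h0 | h0
    · have hev : (fun q : ℝ => g x ^ q * Real.exp (-π * x ^ 2)) =ᶠ[𝓝 p] fun _ => 0 := by
        filter_upwards [eventually_gt_nhds hp0] with q hq
        rw [← h0, Real.zero_rpow hq.ne', zero_mul]
      have : HasDerivAt (fun q : ℝ => g x ^ q * Real.exp (-π * x ^ 2)) 0 p :=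
        (hasDerivAt_const p (0:ℝ)).congr_of_eventuallyEq hev
      simpa [← h0, Real.zero_rpow hp0.ne'] using this
    · have h1 : HasDerivAt (fun q : ℝ => Real.exp (Real.log (g x) * q))
          (Real.exp (Real.log (g x) * p) * Real.log (g x)) p := by
        have := ((hasDerivAt_id p).const_mul (Real.log (g x))).exp
        simpa [mul_comm] using this
      have heq : (fun q : ℝ => Real.exp (Real.log (g x) * q)) = fun q => g x ^ q := by
        funext q; rw [Real.rpow_def_of_pos h0]
      rw [heq] at h1
      rw [Real.rpow_def_of_pos h0]
      exact h1.mul_const _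

lemma slope_tendsto {g : ℝ → ℝ} (hg0 : ∀ x, 0 ≤ g x) (hgm : Measurable g)
    {C : ℝ} (hgC : ∀ x, g x ≤ C) (hL : 0 < gaussL1Norm g) :
    Tendsto (fun p => (gaussLpNorm g p - gaussL1Norm g) / (p - 1)) (𝓝[>] (1:ℝ))
      (𝓝 ((∫ x : ℝ, g x * Real.log (g x) * Real.exp (-π * x ^ 2))
        - gaussL1Norm g * Real.log (gaussL1Norm g))) := by
  set F : ℝ → ℝ := fun p => ∫ x : ℝ, g x ^ p * Real.exp (-π * x ^ 2) with hF
  set D : ℝ := ∫ x : ℝ, g x * Real.log (g x) * Real.exp (-π * x ^ 2) with hD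
  set L : ℝ := gaussL1Norm g with hLdef
  have hF1 : F 1 = L := by
    simp only [hF, hLdef, gaussL1Norm]
    congr 1; funext x; rw [Real.rpow_one]
  have hFd : HasDerivAt F D 1 := F_hasDeriv hg0 hgm hgC
  set Ψ : ℝ → ℝ := fun p => Real.exp (p⁻¹ * Real.log (F p)) with hΨdef
  have hΨ1 : Ψ 1 = L := by
    simp only [hΨdef, inv_one, one_mul, hF1, Real.exp_log hL]
  have hΨd : HasDerivAt Ψ (D - L * Real.log L) 1 := by
    have h1 : HasDerivAt (fun p => Real.log (F p)) (D / F 1) 1 :=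
      hFd.log (by rw [hF1]; exact hL.ne')
    have h2 : HasDerivAt (fun p : ℝ => p⁻¹) (-1) 1 := by
      simpa using hasDerivAt_inv (one_ne_zero (α := ℝ))
    have h3 := (h2.mul h1).exp
    have harith : Real.exp ((1:ℝ)⁻¹ * Real.log (F 1)) *
        (-1 * Real.log (F 1) + 1⁻¹ * (D / F 1)) = D - L * Real.log L := by
      rw [hF1, inv_one, one_mul, Real.exp_log hL]
      field_simp
      ring
    simp only [Pi.mul_apply] at h3
    rw [harith] at h3
    exact h3
  have hslope := hasDerivAt_iff_tendsto_slope.mp hΨd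
  have hmono : 𝓝[>] (1:ℝ) ≤ 𝓝[≠] (1:ℝ) :=
    nhdsWithin_mono _ (fun p hp => ne_of_gt hp)
  have hslope' := hslope.mono_left hmono
  have hFpos : ∀ᶠ p in 𝓝[>] (1:ℝ), 0 < F p :=
    ((hFd.continuousAt.eventually (eventually_gt_nhds (hF1 ▸ hL))).filter_mono
      nhdsWithin_le_nhds)
  refine hslope'.congr' ?_
  filter_upwards [hFpos] with p hFp
  rw [slope_def_field, hΨ1]
  congr 1
  simp only [hΨdef, gaussLpNorm, ← hF]
  rw [Real.rpow_def_of_pos hFp, mul_comm, one_div]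

lemma OU_measurable (t : ℝ) {h : ℝ → ℝ} (hh : Measurable h) :
    Measurable (OUsemigroup t h) := by
  have hsm : StronglyMeasurable (fun z : ℝ × ℝ =>
      h (Real.exp (-t) * z.1 + Real.sqrt (1 - Real.exp (-2 * t)) * z.2) *
        Real.exp (-π * z.2 ^ 2)) :=
    ((hh.comp (by fun_prop)).mul (by fun_prop)).stronglyMeasurable
  exact hsm.integral_prod_right'.measurable

lemma OU_nonneg (t : ℝ) {h : ℝ → ℝ} (hh : ∀ x, 0 ≤ h x) (x : ℝ) :
    0 ≤ OUsemigroup t h x :=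
  integral_nonneg fun y => mul_nonneg (hh _) (Real.exp_nonneg _)

lemma OU_le (t : ℝ) {h : ℝ → ℝ} (hh0 : ∀ x, 0 ≤ h x) (hhm : Measurable h)
    {C : ℝ} (hC : ∀ x, h x ≤ C) (x : ℝ) : OUsemigroup t h x ≤ C := by
  have hint : Integrable (fun y : ℝ =>
      h (Real.exp (-t) * x + Real.sqrt (1 - Real.exp (-2 * t)) * y) *
        Real.exp (-π * y ^ 2)) :=
    integrable_bdd_mul_gauss (hhm.comp (by fun_prop)) (fun y => hh0 _) (fun y => hC _)
  calc OUsemigroup t h x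
      ≤ ∫ y : ℝ, C * Real.exp (-π * y ^ 2) := by
        refine integral_mono hint (gauss_integrable.const_mul C) fun y => ?_
        exact mul_le_mul_of_nonneg_right (hC _) (Real.exp_nonneg _)
    _ = C := by rw [integral_const_mul, gauss_total', mul_one]

lemma OU_zero {h : ℝ → ℝ} : OUsemigroup 0 h = h := by
  funext x
  unfold OUsemigroup
  simp only [neg_zero, Real.exp_zero, one_mul, mul_zero, sub_self, Real.sqrt_zero, zero_mul, add_zero]
  rw [integral_const_mul, gauss_total', mul_one]

/-- Assuming Nelson's hypercontractive inequality
`‖N_t h‖_q ≤ ‖h‖_p` for `(p-1) = e^{-2t}(q-1)`, `1 < p < q`, and `‖N_t h‖₁ = ‖h‖₁`,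
one has the difference-quotient inequality
`(‖N_t h‖_q − ‖h‖₁)/(q−1) ≤ e^{-2t}(‖h‖_p − ‖h‖₁)/(p−1)`, and in the limit `p,q → 1`
the entropic inequality
`∫ N_t h log N_t h dγ ≤ e^{-2t} ∫ h log h dγ + (1−e^{-2t})‖h‖₁ log ‖h‖₁`,
provided `h` is bounded. -/
theorem nelson_implies_entropy_decay
    (t : ℝ) (ht : 0 ≤ t)
    (h : ℝ → ℝ) (hh_nonneg : ∀ x, 0 ≤ h x) (hh_meas : Measurable h)
    (hh_bdd : ∃ C : ℝ, ∀ x, h x ≤ C)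
    (hh_int : Integrable (fun x => h x * Real.exp (-π * x ^ 2)))
    (hNelson : ∀ p q : ℝ, 1 < p → p < q → p - 1 = Real.exp (-2 * t) * (q - 1) →
      gaussLpNorm (OUsemigroup t h) q ≤ gaussLpNorm h p)
    (hL1 : gaussL1Norm (OUsemigroup t h) = gaussL1Norm h) :
    (∀ p q : ℝ, 1 < p → p < q → p - 1 = Real.exp (-2 * t) * (q - 1) →
      (gaussLpNorm (OUsemigroup t h) q - gaussL1Norm h) / (q - 1)
        ≤ Real.exp (-2 * t) * ((gaussLpNorm h p - gaussL1Norm h) / (p - 1))) ∧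
    (∫ x : ℝ, OUsemigroup t h x * Real.log (OUsemigroup t h x) * Real.exp (-π * x ^ 2))
      ≤ Real.exp (-2 * t) * (∫ x : ℝ, h x * Real.log (h x) * Real.exp (-π * x ^ 2))
        + (1 - Real.exp (-2 * t)) * gaussL1Norm h * Real.log (gaussL1Norm h) := by

  obtain ⟨C, hC⟩ := hh_bdd
  have hepos : 0 < Real.exp (-2 * t) := Real.exp_pos _
  have key1 : ∀ p q : ℝ, 1 < p → p < q → p - 1 = Real.exp (-2 * t) * (q - 1) →
      (gaussLpNorm (OUsemigroup t h) q - gaussL1Norm h) / (q - 1)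
        ≤ Real.exp (-2 * t) * ((gaussLpNorm h p - gaussL1Norm h) / (p - 1)) := by
    intro p q hp hpq hrel
    have hq1 : (0:ℝ) < q - 1 := by linarith
    have hN := hNelson p q hp hpq hrel
    have step1 : (gaussLpNorm (OUsemigroup t h) q - gaussL1Norm h) / (q - 1)
        ≤ (gaussLpNorm h p - gaussL1Norm h) / (q - 1) := by
      gcongr
    have step2 : (gaussLpNorm h p - gaussL1Norm h) / (q - 1)
        = Real.exp (-2 * t) * ((gaussLpNorm h p - gaussL1Norm h) / (p - 1)) := by
      rw [hrel]
      field_simp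
    linarith
  refine ⟨key1, ?_⟩
  have hLnn : 0 ≤ gaussL1Norm h :=
    integral_nonneg fun x => mul_nonneg (hh_nonneg x) (Real.exp_nonneg _)
  have hNm : Measurable (OUsemigroup t h) := OU_measurable t hh_meas
  have hNn : ∀ x, 0 ≤ OUsemigroup t h x := OU_nonneg t hh_nonneg
  have hNle : ∀ x, OUsemigroup t h x ≤ C := OU_le t hh_nonneg hh_meas hC
  rcases eq_or_lt_of_le hLnn with hL0 | hLpos
  · -- gaussL1Norm h = 0 : everything vanishes
    have hL0' : gaussL1Norm h = 0 := hL0.symm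
    have hz : (fun x => h x * Real.exp (-π * x ^ 2)) =ᵐ[volume] 0 :=
      (integral_eq_zero_iff_of_nonneg
        (fun x => mul_nonneg (hh_nonneg x) (Real.exp_nonneg _)) hh_int).mp hL0'
    have hh0 : ∀ᵐ x : ℝ, h x = 0 := by
      filter_upwards [hz] with x hx
      have hx' : h x * Real.exp (-π * x ^ 2) = 0 := hx
      rcases mul_eq_zero.mp hx' with h' | h'
      · exact h'
      · exact absurd h' (Real.exp_pos _).ne'
    have e1 : (∫ x : ℝ, h x * Real.log (h x) * Real.exp (-π * x ^ 2)) = 0 := by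
      apply integral_eq_zero_of_ae
      filter_upwards [hh0] with x hx
      rw [hx]; simp
    have hNint : Integrable (fun x => OUsemigroup t h x * Real.exp (-π * x ^ 2)) :=
      integrable_bdd_mul_gauss hNm hNn hNle
    have hNz : (fun x => OUsemigroup t h x * Real.exp (-π * x ^ 2)) =ᵐ[volume] 0 :=
      (integral_eq_zero_iff_of_nonneg
        (fun x => mul_nonneg (hNn x) (Real.exp_nonneg _)) hNint).mp (hL1.trans hL0')
    have hN0 : ∀ᵐ x : ℝ, OUsemigroup t h x = 0 := by
      filter_upwards [hNz] with x hx
      have hx' : OUsemigroup t h x * Real.exp (-π * x ^ 2) = 0 := hx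
      rcases mul_eq_zero.mp hx' with h' | h'
      · exact h'
      · exact absurd h' (Real.exp_pos _).ne'
    have e2 : (∫ x : ℝ, OUsemigroup t h x * Real.log (OUsemigroup t h x) *
        Real.exp (-π * x ^ 2)) = 0 := by
      apply integral_eq_zero_of_ae
      filter_upwards [hN0] with x hx
      rw [hx]; simp
    rw [e1, e2, hL0']
    simp
  · by_cases ht0 : t = 0
    · subst ht0
      rw [OU_zero]
      norm_num
    · have htpos : 0 < t := ht.lt_of_ne (Ne.symm ht0)
      have hE : 1 < Real.exp (2 * t) := by
        have := Real.exp_lt_exp.mpr (show (0:ℝ) < 2 * t by linarith)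
        rwa [Real.exp_zero] at this
      have hee : Real.exp (-2 * t) * Real.exp (2 * t) = 1 := by
        rw [← Real.exp_add]; norm_num
      have S1 := slope_tendsto hh_nonneg hh_meas hC hLpos
      have hLN : gaussL1Norm (OUsemigroup t h) = gaussL1Norm h := hL1
      have S2 := slope_tendsto hNn hNm hNle (by rw [hLN]; exact hLpos)
      rw [hLN] at S2
      set qm : ℝ → ℝ := fun p => 1 + Real.exp (2 * t) * (p - 1) with hqm
      have hqt : Tendsto qm (𝓝[>] (1:ℝ)) (𝓝[>] (1:ℝ)) := by
        apply tendsto_nhdsWithin_of_tendsto_nhds_of_eventually_within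
        · have hc : Continuous qm := by
            apply continuous_const.add (continuous_const.mul (continuous_id.sub continuous_const))
          have := (hc.tendsto 1).mono_left (nhdsWithin_le_nhds (s := Set.Ioi 1))
          simpa [hqm] using this
        · filter_upwards [self_mem_nhdsWithin] with p hp
          have hp1 : 1 < p := hp
          show 1 < qm p
          simp only [hqm]
          nlinarith
      have S2' := S2.comp hqt
      have hineq : ∀ᶠ p in 𝓝[>] (1:ℝ),
          ((fun q => (gaussLpNorm (OUsemigroup t h) q - gaussL1Norm h) / (q - 1)) ∘ qm) p
            ≤ Real.exp (-2 * t) * ((gaussLpNorm h p - gaussL1Norm h) / (p - 1)) := by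
        filter_upwards [self_mem_nhdsWithin] with p hp
        have hp1 : 1 < p := hp
        exact key1 p (qm p) hp1 (by simp only [hqm]; nlinarith)
          (by simp only [hqm]; linear_combination (1 - p) * hee)
      have hfinal := le_of_tendsto_of_tendsto S2' (S1.const_mul (Real.exp (-2 * t))) hineq
      rw [mul_sub] at hfinal
      have hg1 : (1 - Real.exp (-2 * t)) * gaussL1Norm h * Real.log (gaussL1Norm h)
          = gaussL1Norm h * Real.log (gaussL1Norm h)
            - Real.exp (-2 * t) * (gaussL1Norm h * Real.log (gaussL1Norm h)) := by ring
      rw [hg1]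
      linarith
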